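/- Let H be a separable complex Hilbert space, m ≥ 1, I ⊆ [-1/2,1/2]^m a measurable set, and D a countable index set. Suppose g : D × I → H is such that for each η ∈ D the map λ ↦ g_η(λ) is measurable, and for almost every λ ∈ I the family (g_η(λ))_{η∈D} is a Parseval frame for H. For k ∈ ℤ^m and η ∈ D define F_{k,η} ∈ L²(I; H) by F_{k,η}(λ) = e^{2πi⟨k,λ⟩} g_η(λ). Then the family (F_{k,η})_{(k,η) ∈ ℤ^m × D} is a Parseval frame for L²(I; H): for every F ∈ L²(I; H), ∑_{k∈ℤ^m} ∑_{η∈D} |⟨F, F_{k,η}⟩_{L²(I;H)}|² = ‖F‖²_{L²(I;H)}. -/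

import Mathlib

open MeasureTheory Matrix
open scoped Real

section ModulatedHelpers

open Set Submodule
open scoped ComplexConjugate ENNReal

attribute [local instance] ZeroLEOneClass.factZeroLtOne

noncomputable section

namespace ModFrameAux

abbrev Tor (m : ℕ) : Type := Fin m → AddCircle (1 : ℝ)

instance : IsProbabilityMeasure (volume : Measure (AddCircle (1 : ℝ))) :=
  ⟨by simp [AddCircle.measure_univ]⟩

variable (m : ℕ)

def tchar (k : Fin m → ℤ) : C(Tor m, ℂ) :=
  ⟨fun x => ∏ i, fourier (k i) (x i),
   continuous_finset_prod _ fun i _ => (fourier (k i)).continuous.comp (continuous_apply i)⟩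

lemma tchar_apply (k : Fin m → ℤ) (x : Tor m) : tchar m k x = ∏ i, fourier (k i) (x i) := rfl

lemma tchar_neg (k : Fin m → ℤ) (x : Tor m) : tchar m (-k) x = conj (tchar m k x) := by
  rw [tchar_apply, tchar_apply, map_prod]
  exact Finset.prod_congr rfl fun i _ => by rw [Pi.neg_apply, fourier_neg]

lemma star_tchar (k : Fin m → ℤ) : star (tchar m k) = tchar m (-k) :=
  ContinuousMap.ext fun x => by
    simp only [ContinuousMap.star_apply, tchar_neg, RCLike.star_def]

lemma tchar_add (k l : Fin m → ℤ) : tchar m (k + l) = tchar m k * tchar m l := by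
  ext x
  simp only [tchar_apply, ContinuousMap.mul_apply, Pi.add_apply]
  rw [← Finset.prod_mul_distrib]
  exact Finset.prod_congr rfl fun i _ => fourier_add

lemma tchar_zero : tchar m 0 = 1 :=
  ContinuousMap.ext fun x => by
    simp [tchar_apply, fourier_zero]

def tA : StarSubalgebra ℂ C(Tor m, ℂ) where
  toSubalgebra := Algebra.adjoin ℂ (Set.range (tchar m))
  star_mem' := by
    show Algebra.adjoin ℂ (Set.range (tchar m)) ≤ star (Algebra.adjoin ℂ (Set.range (tchar m)))
    refine Algebra.adjoin_le ?_
    rintro - ⟨k, rfl⟩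
    exact Algebra.subset_adjoin ⟨-k, (star_tchar m k).symm ▸ rfl⟩

lemma tA_coe : Subalgebra.toSubmodule (tA m).toSubalgebra = span ℂ (Set.range (tchar m)) := by
  apply Algebra.adjoin_eq_span_of_subset
  refine Subset.trans ?_ Submodule.subset_span
  intro x hx
  refine Submonoid.closure_induction (fun _ => id) ⟨0, tchar_zero m⟩ ?_ hx
  rintro - - - - ⟨a, rfl⟩ ⟨b, rfl⟩
  exact ⟨a + b, tchar_add m a b⟩

lemma tA_sep : (tA m).SeparatesPoints := by
  intro x y hxy
  obtain ⟨i, hi⟩ := Function.ne_iff.mp hxy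
  refine ⟨_, ⟨tchar m (Pi.single i 1), Algebra.subset_adjoin ⟨_, rfl⟩, rfl⟩, ?_⟩
  have key : ∀ z : Tor m, tchar m (Pi.single i 1) z = fourier 1 (z i) := by
    intro z
    rw [tchar_apply,
      Finset.prod_eq_single i (fun j _ hj => by simp [Pi.single_eq_of_ne hj, fourier_zero])
        (by simp)]
    simp
  dsimp only
  rw [key, key]
  simp only [fourier_one]
  contrapose! hi
  rw [Circle.coe_inj] at hi
  exact AddCircle.injective_toCircle one_ne_zero hi

lemma tA_closure : (tA m).topologicalClosure = ⊤ :=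
  ContinuousMap.starSubalgebra_topologicalClosure_eq_top_of_separatesPoints _ (tA_sep m)

lemma span_tchar_closure : (span ℂ (Set.range (tchar m))).topologicalClosure = ⊤ := by
  rw [← tA_coe]
  exact congr_arg (Subalgebra.toSubmodule <| StarSubalgebra.toSubalgebra ·) (tA_closure m)

def tLp (k : Fin m → ℤ) : Lp ℂ 2 (volume : Measure (Tor m)) :=
  ContinuousMap.toLp (E := ℂ) 2 volume ℂ (tchar m k)

lemma span_tLp_closure : (span ℂ (Set.range (tLp m))).topologicalClosure = ⊤ := by
  convert (ContinuousMap.toLp_denseRange ℂ (volume : Measure (Tor m)) ℂ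
      (by norm_num : (2 : ℝ≥0∞) ≠ ∞)).topologicalClosure_map_submodule (span_tchar_closure m)
  case e'_3 => rfl
  erw [map_span, range_comp]
  rfl


variable (m : ℕ)
lemma volume_circle_eq : (volume : Measure (AddCircle (1:ℝ))) = AddCircle.haarAddCircle := by
  rw [AddCircle.volume_eq_smul_haarAddCircle]
  simp

lemma orthonormal_tLp : Orthonormal ℂ (tLp m) := by
  rw [orthonormal_iff_ite]
  intro k l
  rw [tLp, tLp, ContinuousMap.inner_toLp (volume : Measure (Tor m)) (tchar m k) (tchar m l)]
  simp only [mul_comm (tchar m l _)]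
  have hpt : ∀ x : Tor m, conj (tchar m k x) * tchar m l x
      = ∏ i, (conj (fourier (k i) (x i)) * fourier (l i) (x i)) := by
    intro x
    rw [tchar_apply, tchar_apply, map_prod, ← Finset.prod_mul_distrib]
  calc (∫ x : Tor m, conj (tchar m k x) * tchar m l x)
      = ∫ x : Tor m, ∏ i, (conj (fourier (k i) (x i)) * fourier (l i) (x i)) := by
        simp_rw [hpt]
    _ = ∏ i, ∫ y : AddCircle (1:ℝ), conj (fourier (k i) y) * fourier (l i) y :=
        MeasureTheory.integral_fintype_prod_eq_prod
          (fun i y => conj (fourier (k i) y) * fourier (l i) y)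
    _ = ∏ i, (if k i = l i then (1:ℂ) else 0) := by
        refine Finset.prod_congr rfl fun i _ => ?_
        rw [show (∫ y : AddCircle (1:ℝ), conj (fourier (k i) y) * fourier (l i) y)
            = ∫ y : AddCircle (1:ℝ), fourier (l i) y * conj (fourier (k i) y)
              ∂(AddCircle.haarAddCircle) by
              rw [← volume_circle_eq]
              exact integral_congr_ae (Filter.Eventually.of_forall fun y => mul_comm _ _),
          ← ContinuousMap.inner_toLp (AddCircle.haarAddCircle) (fourier (k i)) (fourier (l i))]
        exact orthonormal_iff_ite.mp orthonormal_fourier (k i) (l i)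
    _ = if k = l then 1 else 0 := by
        by_cases h : k = l
        · subst h; simp
        · obtain ⟨i, hi⟩ := Function.ne_iff.mp h
          rw [if_neg h]
          exact Finset.prod_eq_zero (Finset.mem_univ i) (if_neg hi)

lemma torus_parseval (h' : Tor m → ℂ) (hh' : MemLp h' 2 (volume : Measure (Tor m))) :
    Summable (fun k : Fin m → ℤ => ‖∫ x : Tor m, conj (tchar m k x) * h' x‖ ^ 2) ∧
    ∑' k : Fin m → ℤ, ‖∫ x : Tor m, conj (tchar m k x) * h' x‖ ^ 2
      = ∫ x : Tor m, ‖h' x‖ ^ 2 := by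
  have hB : ⊤ ≤ (span ℂ (Set.range (tLp m))).topologicalClosure := (span_tLp_closure m).ge
  set B : HilbertBasis (Fin m → ℤ) ℂ (Lp ℂ 2 (volume : Measure (Tor m))) :=
    HilbertBasis.mk (orthonormal_tLp m) hB with hBdef
  set u : Lp ℂ 2 (volume : Measure (Tor m)) := hh'.toLp h' with hu
  have hco : ∀ k, (B.repr u) k = ∫ x : Tor m, conj (tchar m k x) * h' x := by
    intro k
    rw [B.repr_apply_apply]
    have hBk : B k = ContinuousMap.toLp (E := ℂ) 2 volume ℂ (tchar m k) := by
      rw [hBdef, HilbertBasis.coe_mk]; rfl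
    rw [hBk, MeasureTheory.L2.inner_def]
    refine integral_congr_ae ?_
    filter_upwards [ContinuousMap.coeFn_toLp (p := 2) (𝕜 := ℂ)
      (volume : Measure (Tor m)) (f := tchar m k), hh'.coeFn_toLp] with x h1 h2
    rw [h1, h2, RCLike.inner_apply']
  have hnorm : ‖u‖ ^ 2 = ∫ x : Tor m, ‖h' x‖ ^ 2 := by
    have h1 : ((‖u‖ : ℂ)) ^ 2 = inner ℂ u u := (inner_self_eq_norm_sq_to_K (𝕜 := ℂ) u).symm
    have h2 : (inner ℂ u u : ℂ) = ∫ x : Tor m, ((‖h' x‖ ^ 2 : ℝ) : ℂ) := by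
      rw [MeasureTheory.L2.inner_def]
      refine integral_congr_ae ?_
      filter_upwards [hh'.coeFn_toLp] with x hx
      rw [hx, RCLike.inner_apply', RCLike.conj_mul]
      norm_cast
    have h3 : (∫ x : Tor m, ((‖h' x‖ ^ 2 : ℝ) : ℂ)) = ((∫ x : Tor m, ‖h' x‖ ^ 2 : ℝ) : ℂ) :=
      integral_ofReal
    have := h1.trans (h2.trans h3)
    exact_mod_cast this
  have hpow : ∀ r : ℝ, r ^ ((2 : ℝ≥0∞)).toReal = r ^ (2 : ℕ) := fun r => by
    rw [show ((2 : ℝ≥0∞)).toReal = ((2 : ℕ) : ℝ) by norm_num, Real.rpow_natCast]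
  have hsum : Summable (fun k => ‖(B.repr u) k‖ ^ 2) := by
    have := (lp.hasSum_norm (p := 2) (by norm_num) (B.repr u)).summable
    simpa [hpow] using this
  have hval : (∑' k, ‖(B.repr u) k‖ ^ 2) = ‖u‖ ^ 2 := by
    have := lp.norm_rpow_eq_tsum (p := 2) (by norm_num) (B.repr u)
    simp only [hpow] at this
    rw [← this, ← B.repr.norm_map u]
  constructor
  · exact hsum.congr fun k => by rw [hco k]
  · calc ∑' k : Fin m → ℤ, ‖∫ x : Tor m, conj (tchar m k x) * h' x‖ ^ 2
        = ∑' k, ‖(B.repr u) k‖ ^ 2 := tsum_congr fun k => by rw [hco k]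
      _ = ‖u‖ ^ 2 := hval
      _ = _ := hnorm


def Qc (m : ℕ) : Set (Fin m → ℝ) := univ.pi fun _ => Ioc (-(1/2) : ℝ) (-(1/2) + 1)

def qc : AddCircle (1 : ℝ) → ℝ := fun x => ((AddCircle.equivIoc 1 (-(1/2)) x : Ioc _ _) : ℝ)

lemma measurable_qc : Measurable qc :=
  measurable_subtype_coe.comp (AddCircle.measurableEquivIoc 1 (-(1/2))).measurable

lemma qc_mem (x : AddCircle (1 : ℝ)) : qc x ∈ Ioc (-(1/2) : ℝ) (-(1/2) + 1) :=
  (AddCircle.equivIoc 1 (-(1/2)) x).2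

lemma coe_qc (x : AddCircle (1 : ℝ)) : ((qc x : ℝ) : AddCircle (1 : ℝ)) = x := by
  have h : ∀ y : Ioc (-(1/2) : ℝ) (-(1/2) + 1),
      ((y : ℝ) : AddCircle (1 : ℝ)) = (AddCircle.equivIoc 1 (-(1/2))).symm y := fun y => rfl
  rw [qc, h, Equiv.symm_apply_apply]

lemma qc_coe {r : ℝ} (hr : r ∈ Ioc (-(1/2) : ℝ) (-(1/2) + 1)) :
    qc ((r : AddCircle (1 : ℝ))) = r :=
  AddCircle.liftIoc_coe_apply (f := (id : ℝ → ℝ)) hr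

lemma map_qc : Measure.map qc volume = volume.restrict (Ioc (-(1/2) : ℝ) (-(1/2) + 1)) := by
  have h1 := AddCircle.measurePreserving_mk 1 (-(1/2))
  rw [← h1.map_eq, Measure.map_map measurable_qc AddCircle.measurable_mk']
  have h2 : qc ∘ ((↑) : ℝ → AddCircle (1 : ℝ))
      =ᵐ[volume.restrict (Ioc (-(1/2) : ℝ) (-(1/2) + 1))] id := by
    filter_upwards [ae_restrict_mem measurableSet_Ioc] with r hr
    exact qc_coe hr
  rw [Measure.map_congr h2, Measure.map_id]

variable (m : ℕ)

def qm : Tor m → (Fin m → ℝ) := fun x i => qc (x i)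

lemma measurable_qm : Measurable (qm m) :=
  measurable_pi_lambda _ fun i => measurable_qc.comp (measurable_pi_apply i)

lemma mp_qm : MeasurePreserving (qm m) (volume : Measure (Tor m))
    (volume.restrict (Qc m)) := by
  refine ⟨measurable_qm m, ?_⟩
  have hres : volume.restrict (Qc m)
      = Measure.pi (fun _ : Fin m => volume.restrict (Ioc (-(1/2) : ℝ) (-(1/2) + 1))) := by
    refine (Measure.pi_eq fun s hs => ?_).symm
    rw [Measure.restrict_apply (MeasurableSet.univ_pi hs),
      show univ.pi s ∩ Qc m = univ.pi (fun i => s i ∩ Ioc (-(1/2) : ℝ) (-(1/2) + 1)) by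
        ext z; simp [Qc, Set.mem_pi, forall_and],
      volume_pi_pi]
    exact Finset.prod_congr rfl fun i _ => (Measure.restrict_apply (hs i)).symm
  rw [hres]
  refine (Measure.pi_eq fun s hs => ?_).symm
  rw [Measure.map_apply (measurable_qm m) (MeasurableSet.univ_pi hs),
    show (qm m) ⁻¹' (univ.pi s) = univ.pi (fun i => qc ⁻¹' (s i)) by
      ext x; simp [qm, Set.mem_pi],
    volume_pi_pi]
  exact Finset.prod_congr rfl fun i _ => by
    rw [← map_qc, Measure.map_apply measurable_qc (hs i)]

lemma tchar_comp_qm (k : Fin m → ℤ) (x : Tor m) :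
    tchar m k x
      = Complex.exp (2 * π * Complex.I * (((fun i => (k i : ℝ)) ⬝ᵥ qm m x : ℝ) : ℂ)) := by
  rw [tchar_apply]
  have hterm : ∀ i, fourier (k i) (x i)
      = Complex.exp (2 * π * Complex.I * (((k i : ℝ) * qm m x i : ℝ) : ℂ)) := by
    intro i
    rw [← coe_qc (x i), fourier_coe_apply]
    simp only [qm]
    push_cast
    congr 1
    ring
  rw [Finset.prod_congr rfl fun i _ => hterm i, ← Complex.exp_sum]
  congr 1
  simp only [dotProduct]
  push_cast
  rw [Finset.mul_sum]

lemma cube_parseval (h : (Fin m → ℝ) → ℂ) (hh : MemLp h 2 (volume.restrict (Qc m))) :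
    Summable (fun k : Fin m → ℤ =>
      ‖∫ lam, Complex.exp (2 * π * Complex.I
          * (((fun i => (k i : ℝ)) ⬝ᵥ lam : ℝ) : ℂ)) * h lam
        ∂(volume.restrict (Qc m))‖ ^ 2) ∧
    ∑' k : Fin m → ℤ,
      ‖∫ lam, Complex.exp (2 * π * Complex.I
          * (((fun i => (k i : ℝ)) ⬝ᵥ lam : ℝ) : ℂ)) * h lam
        ∂(volume.restrict (Qc m))‖ ^ 2
      = ∫ lam, ‖h lam‖ ^ 2 ∂(volume.restrict (Qc m)) := by
  have hmp := mp_qm m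
  have hh' : MemLp (h ∘ qm m) 2 (volume : Measure (Tor m)) :=
    hh.comp_measurePreserving hmp
  have hint : ∀ k : Fin m → ℤ,
      (∫ x : Tor m, conj (tchar m (-k) x) * (h ∘ qm m) x)
        = ∫ lam, Complex.exp (2 * π * Complex.I
            * (((fun i => (k i : ℝ)) ⬝ᵥ lam : ℝ) : ℂ)) * h lam
          ∂(volume.restrict (Qc m)) := by
    intro k
    have hcont : Continuous fun lam : Fin m → ℝ =>
        Complex.exp (2 * π * Complex.I
          * (((fun i => (k i : ℝ)) ⬝ᵥ lam : ℝ) : ℂ)) := by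
      refine Complex.continuous_exp.comp
        (continuous_const.mul (Complex.continuous_ofReal.comp ?_))
      exact continuous_finset_sum _ fun i _ => continuous_const.mul (continuous_apply i)
    have hf : AEStronglyMeasurable (fun lam => Complex.exp (2 * π * Complex.I
        * (((fun i => (k i : ℝ)) ⬝ᵥ lam : ℝ) : ℂ)) * h lam) (volume.restrict (Qc m)) :=
      hcont.aestronglyMeasurable.mul hh.1
    rw [show (∫ lam, Complex.exp (2 * π * Complex.I
          * (((fun i => (k i : ℝ)) ⬝ᵥ lam : ℝ) : ℂ)) * h lam ∂(volume.restrict (Qc m)))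
        = ∫ lam, Complex.exp (2 * π * Complex.I
          * (((fun i => (k i : ℝ)) ⬝ᵥ lam : ℝ) : ℂ)) * h lam ∂(Measure.map (qm m) volume)
        by rw [hmp.map_eq],
      integral_map (measurable_qm m).aemeasurable (by rwa [hmp.map_eq])]
    refine integral_congr_ae (Filter.Eventually.of_forall fun x => ?_)
    simp only [Function.comp_apply]
    rw [tchar_neg, RingHomCompTriple.comp_apply, RingHom.id_apply, tchar_comp_qm]
  have hnrm : (∫ x : Tor m, ‖(h ∘ qm m) x‖ ^ 2)
      = ∫ lam, ‖h lam‖ ^ 2 ∂(volume.restrict (Qc m)) := by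
    have hf : AEStronglyMeasurable (fun lam => ‖h lam‖ ^ 2) (volume.restrict (Qc m)) := by
      exact (continuous_pow 2).comp_aestronglyMeasurable hh.1.norm
    rw [show (∫ lam, ‖h lam‖ ^ 2 ∂(volume.restrict (Qc m)))
        = ∫ lam, ‖h lam‖ ^ 2 ∂(Measure.map (qm m) volume) by rw [hmp.map_eq],
      integral_map (measurable_qm m).aemeasurable (by rwa [hmp.map_eq])]
    rfl
  obtain ⟨hs, he⟩ := torus_parseval m (h ∘ qm m) hh'
  have hneg : ∀ k : Fin m → ℤ,
      ‖∫ x : Tor m, conj (tchar m (-k) x) * (h ∘ qm m) x‖ ^ 2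
        = (fun l : Fin m → ℤ => ‖∫ x : Tor m, conj (tchar m l x) * (h ∘ qm m) x‖ ^ 2) (-k) :=
    fun k => rfl
  constructor
  · refine (hs.comp_injective neg_injective).congr fun k => ?_
    rw [← hint k]; rfl
  · rw [← hnrm, ← he, ← (Equiv.neg (Fin m → ℤ)).tsum_eq
      (fun l : Fin m → ℤ => ‖∫ x : Tor m, conj (tchar m l x) * (h ∘ qm m) x‖ ^ 2)]
    exact tsum_congr fun k => by rw [← hint k]; rfl


lemma final_swap {ι κ : Type*} [Countable κ] (x : ι → κ → ℝ) (S : κ → ℝ) (T : ℝ)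
    (hxnn : ∀ i j, 0 ≤ x i j) (hTnn : 0 ≤ T)
    (hrow : ∀ j, Summable (fun i => x i j) ∧ ∑' i, x i j = S j)
    (hS : ∑' j, ENNReal.ofReal (S j) = ENNReal.ofReal T) :
    ∑' i, ∑' j, x i j = T := by
  have hij : ∀ j, ∑' i, ENNReal.ofReal (x i j) = ENNReal.ofReal (S j) := fun j => by
    rw [← ENNReal.ofReal_tsum_of_nonneg (fun i => hxnn i j) (hrow j).1, (hrow j).2]
  have hcomm : (∑' i, ∑' j, ENNReal.ofReal (x i j)) = ENNReal.ofReal T := by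
    rw [ENNReal.tsum_comm]
    simp_rw [hij]
    exact hS
  have hfin : ∀ i, (∑' j, ENNReal.ofReal (x i j)) ≠ ⊤ := fun i => by
    refine ne_top_of_le_ne_top ?_
      (ENNReal.le_tsum (f := fun i => ∑' j, ENNReal.ofReal (x i j)) i)
    rw [hcomm]
    exact ENNReal.ofReal_ne_top
  calc ∑' i, ∑' j, x i j
      = ∑' i, (∑' j, ENNReal.ofReal (x i j)).toReal := by
        refine tsum_congr fun i => ?_
        rw [ENNReal.tsum_toReal_eq (fun j => ENNReal.ofReal_ne_top)]
        exact tsum_congr fun j => (ENNReal.toReal_ofReal (hxnn i j)).symm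
    _ = (∑' i, ∑' j, ENNReal.ofReal (x i j)).toReal := (ENNReal.tsum_toReal_eq hfin).symm
    _ = T := by rw [hcomm, ENNReal.toReal_ofReal hTnn]

end ModFrameAux

end

end ModulatedHelpers

section MainTheorem

open Set ModFrameAux
open scoped ComplexConjugate ENNReal

/-- if for a.e. `λ ∈ I ⊆ [-1/2,1/2]^m` the family `(g_η(λ))_{η ∈ D}` is a
Parseval frame for the separable complex Hilbert space `H`, then the modulated family
`F_{k,η}(λ) = e^{2πi⟨k,λ⟩} g_η(λ)`, `(k,η) ∈ ℤ^m × D`, is a Parseval frame for `L²(I; H)`. -/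
theorem modulated_fields_parseval_frame
    {H : Type*} [NormedAddCommGroup H] [InnerProductSpace ℂ H]
    [CompleteSpace H] [SecondCountableTopology H]
    (m : ℕ) (hm : 1 ≤ m) (I : Set (Fin m → ℝ)) (hI : MeasurableSet I)
    (hIcube : I ⊆ {lam : Fin m → ℝ | ∀ i, lam i ∈ Set.Icc (-(1/2) : ℝ) (1/2)})
    {D : Type*} [Countable D]
    (g : D → (Fin m → ℝ) → H)
    (hgmeas : ∀ η : D, StronglyMeasurable (g η))
    (hPar : ∀ᵐ lam ∂(volume.restrict I),
      ∀ f : H, ∑' η : D, ‖(inner ℂ f (g η lam) : ℂ)‖ ^ 2 = ‖f‖ ^ 2)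
    (F : (Fin m → ℝ) → H) (hF : MemLp F 2 (volume.restrict I)) :
    ∑' (k : Fin m → ℤ) (η : D),
      ‖∫ lam in I,
          (inner ℂ (F lam)
            (Complex.exp (2 * π * Complex.I * (((fun i => (k i : ℝ)) ⬝ᵥ lam : ℝ) : ℂ)) •
              g η lam) : ℂ)‖ ^ 2
      = ∫ lam in I, ‖F lam‖ ^ 2 := by
  classical
  have hQmeas : MeasurableSet (Qc m) := MeasurableSet.univ_pi fun _ => measurableSet_Ioc
  set J := I ∩ Qc m with hJdef
  have hJmeas : MeasurableSet J := hI.inter hQmeas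
  have hJQ : J ⊆ Qc m := inter_subset_right
  have hIJ : volume.restrict I = volume.restrict J := by
    refine Measure.restrict_congr_set ?_
    rw [MeasureTheory.ae_eq_set]
    constructor
    · refine measure_mono_null (fun lam hlam => ?_)
        (?_ : volume (⋃ i, {lam : Fin m → ℝ | lam i = -(1/2)}) = 0)
      · obtain ⟨hlI, hlJ⟩ := hlam
        have hex : ∃ i, lam i ∉ Ioc (-(1/2) : ℝ) (-(1/2) + 1) := by
          by_contra hcon
          push_neg at hcon
          exact hlJ ⟨hlI, fun i _ => hcon i⟩
        obtain ⟨i, hi⟩ := hex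
        have h1 := hIcube hlI i
        simp only [mem_Ioc, not_and_or, not_lt, not_le] at hi
        refine mem_iUnion.2 ⟨i, ?_⟩
        have h2 : lam i = -(1/2) := by
          rcases hi with h | h
          · exact le_antisymm h h1.1
          · exfalso
            have := h1.2
            norm_num at h this
            linarith
        exact h2
      · refine measure_iUnion_null fun i => ?_
        rw [show (volume : Measure (Fin m → ℝ)) = Measure.pi fun _ => volume from rfl]
        exact Measure.pi_hyperplane _ i _
    · rw [Set.diff_eq_empty.mpr inter_subset_left]
      exact measure_empty
  simp only [hIJ] at hPar hF ⊢
  set h : D → (Fin m → ℝ) → ℂ := fun η lam => (inner ℂ (F lam) (g η lam) : ℂ) with hhdef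
  have hAESM : ∀ η, AEStronglyMeasurable (h η) (volume.restrict J) := fun η =>
    hF.1.inner (hgmeas η).aestronglyMeasurable
  have hae : ∀ᵐ lam ∂(volume.restrict J),
      Summable (fun η => ‖h η lam‖ ^ 2) ∧ (∑' η, ‖h η lam‖ ^ 2) = ‖F lam‖ ^ 2 := by
    filter_upwards [hPar] with lam hlam
    rcases em (Summable fun η => ‖h η lam‖ ^ 2) with hs | hs
    · exact ⟨hs, hlam (F lam)⟩
    · have h0 : ‖F lam‖ ^ 2 = 0 := by
        rw [← hlam (F lam), tsum_eq_zero_of_not_summable hs]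
      have hF0 : F lam = 0 := by
        have := (pow_eq_zero_iff (n := 2) (by norm_num)).mp h0
        simpa using this
      have hz : (fun η => ‖h η lam‖ ^ 2) = fun _ => (0 : ℝ) :=
        funext fun η => by simp [hhdef, hF0]
      exact ⟨hz ▸ summable_zero, by rw [hz, tsum_zero, h0]⟩
  have hmem : ∀ η, MemLp (h η) 2 (volume.restrict J) := by
    intro η
    refine hF.mono (hAESM η) ?_
    filter_upwards [hae] with lam hlam
    obtain ⟨hs, hv⟩ := hlam
    have h1 : ‖h η lam‖ ^ 2 ≤ ‖F lam‖ ^ 2 :=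
      hv ▸ hs.le_tsum η fun _ _ => sq_nonneg _
    calc ‖h η lam‖ = Real.sqrt (‖h η lam‖ ^ 2) := (Real.sqrt_sq (norm_nonneg _)).symm
      _ ≤ Real.sqrt (‖F lam‖ ^ 2) := Real.sqrt_le_sqrt h1
      _ = ‖F lam‖ := Real.sqrt_sq (norm_nonneg _)
  have hmem' : ∀ η, MemLp (J.indicator (h η)) 2 (volume.restrict (Qc m)) := by
    intro η
    rw [memLp_indicator_iff_restrict hJmeas, Measure.restrict_restrict hJmeas,
      Set.inter_eq_self_of_subset_left hJQ]
    exact hmem η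
  have keyC : ∀ f : (Fin m → ℝ) → ℂ,
      (∫ lam, J.indicator f lam ∂(volume.restrict (Qc m))) = ∫ lam in J, f lam := by
    intro f
    rw [integral_indicator hJmeas, Measure.restrict_restrict hJmeas,
      Set.inter_eq_self_of_subset_left hJQ]
  have keyR : ∀ f : (Fin m → ℝ) → ℝ,
      (∫ lam, J.indicator f lam ∂(volume.restrict (Qc m))) = ∫ lam in J, f lam := by
    intro f
    rw [integral_indicator hJmeas, Measure.restrict_restrict hJmeas,
      Set.inter_eq_self_of_subset_left hJQ]
  have hcube : ∀ η : D,
      Summable (fun k : Fin m → ℤ => ‖∫ lam in J,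
          (inner ℂ (F lam)
            (Complex.exp (2 * π * Complex.I * (((fun i => (k i : ℝ)) ⬝ᵥ lam : ℝ) : ℂ)) •
              g η lam) : ℂ)‖ ^ 2) ∧
      (∑' k : Fin m → ℤ, ‖∫ lam in J,
          (inner ℂ (F lam)
            (Complex.exp (2 * π * Complex.I * (((fun i => (k i : ℝ)) ⬝ᵥ lam : ℝ) : ℂ)) •
              g η lam) : ℂ)‖ ^ 2)
        = ∫ lam in J, ‖h η lam‖ ^ 2 := by
    intro η
    obtain ⟨hs, he⟩ := cube_parseval m (J.indicator (h η)) (hmem' η)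
    have hI1 : ∀ k : Fin m → ℤ,
        (∫ lam, (Complex.exp (2 * π * Complex.I
            * (((fun i => (k i : ℝ)) ⬝ᵥ lam : ℝ) : ℂ))) * (J.indicator (h η)) lam
          ∂(volume.restrict (Qc m)))
        = ∫ lam in J,
          (inner ℂ (F lam)
            (Complex.exp (2 * π * Complex.I * (((fun i => (k i : ℝ)) ⬝ᵥ lam : ℝ) : ℂ)) •
              g η lam) : ℂ) := by
      intro k
      have hind : (fun lam => (Complex.exp (2 * π * Complex.I
            * (((fun i => (k i : ℝ)) ⬝ᵥ lam : ℝ) : ℂ))) * (J.indicator (h η)) lam)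
          = J.indicator (fun lam => (Complex.exp (2 * π * Complex.I
            * (((fun i => (k i : ℝ)) ⬝ᵥ lam : ℝ) : ℂ))) * h η lam) := by
        funext lam
        by_cases hl : lam ∈ J <;> simp [hl]
      rw [hind, keyC]
      refine integral_congr_ae (Filter.Eventually.of_forall fun lam => ?_)
      simp only [hhdef, inner_smul_right]
    have hI2 : (∫ lam, ‖J.indicator (h η) lam‖ ^ 2 ∂(volume.restrict (Qc m)))
        = ∫ lam in J, ‖h η lam‖ ^ 2 := by
      have hind : (fun lam => ‖J.indicator (h η) lam‖ ^ 2)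
          = J.indicator (fun lam => ‖h η lam‖ ^ 2) := by
        funext lam
        by_cases hl : lam ∈ J <;> simp [hl]
      rw [hind, keyR]
    constructor
    · exact hs.congr fun k => by rw [hI1 k]
    · rw [← hI2, ← he]
      exact tsum_congr fun k => by rw [← hI1 k]
  -- sum over η of the L² norms
  have hIntF : Integrable (fun lam => ‖F lam‖ ^ 2) (volume.restrict J) := by
    have := hF.integrable_norm_rpow two_ne_zero ENNReal.ofNat_ne_top
    simpa [ENNReal.toReal_ofNat, Real.rpow_natCast,
      show ((2 : ℝ≥0∞)).toReal = ((2 : ℕ) : ℝ) by norm_num] using this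
  have hInth : ∀ η, Integrable (fun lam => ‖h η lam‖ ^ 2) (volume.restrict J) := by
    intro η
    have := (hmem η).integrable_norm_rpow two_ne_zero ENNReal.ofNat_ne_top
    simpa [show ((2 : ℝ≥0∞)).toReal = ((2 : ℕ) : ℝ) by norm_num, Real.rpow_natCast] using this
  have hStot : (∑' η : D, ENNReal.ofReal (∫ lam in J, ‖h η lam‖ ^ 2))
      = ENNReal.ofReal (∫ lam in J, ‖F lam‖ ^ 2) := by
    have h1 : ∀ η, ENNReal.ofReal (∫ lam in J, ‖h η lam‖ ^ 2)
        = ∫⁻ lam, ENNReal.ofReal (‖h η lam‖ ^ 2) ∂(volume.restrict J) := fun η =>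
      ofReal_integral_eq_lintegral_ofReal (hInth η)
        (Filter.Eventually.of_forall fun _ => sq_nonneg _)
    have h2 : (∑' η : D, ∫⁻ lam, ENNReal.ofReal (‖h η lam‖ ^ 2) ∂(volume.restrict J))
        = ∫⁻ lam, ∑' η : D, ENNReal.ofReal (‖h η lam‖ ^ 2) ∂(volume.restrict J) :=
      (lintegral_tsum fun η =>
        (((hAESM η).norm.aemeasurable.pow_const 2).ennreal_ofReal)).symm
    have h3 : (∫⁻ lam, ∑' η : D, ENNReal.ofReal (‖h η lam‖ ^ 2) ∂(volume.restrict J))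
        = ∫⁻ lam, ENNReal.ofReal (‖F lam‖ ^ 2) ∂(volume.restrict J) := by
      refine lintegral_congr_ae ?_
      filter_upwards [hae] with lam hlam
      obtain ⟨hs, hv⟩ := hlam
      rw [← ENNReal.ofReal_tsum_of_nonneg (fun _ => sq_nonneg _) hs, hv]
    have h4 : (∫⁻ lam, ENNReal.ofReal (‖F lam‖ ^ 2) ∂(volume.restrict J))
        = ENNReal.ofReal (∫ lam in J, ‖F lam‖ ^ 2) :=
      (ofReal_integral_eq_lintegral_ofReal hIntF
        (Filter.Eventually.of_forall fun _ => sq_nonneg _)).symm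
    simp_rw [h1]
    rw [h2, h3, h4]
  exact final_swap _ (fun η => ∫ lam in J, ‖h η lam‖ ^ 2) _
    (fun k η => sq_nonneg _) (integral_nonneg fun _ => sq_nonneg _) hcube hStot

end MainTheorem
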